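/- Define, on the open set {(x,y,z) ∈ ℝ³ : x > 0}, the map Φ(x,y,z) = (C, χ, z) with C = (x² + y² + z²)/2 and χ = e^{−z²/2} arctan(y/x). Then Φ is differentiable and the determinant of its Jacobian matrix equals e^{−z²/2} at every point of this set. (Hence dC ∧ dχ ∧ dz = e^{−z²/2} dx ∧ dy ∧ dz, identifying the invariant measure of the flow v = e^{z²/2} ∇C × ∇H.) -/

import Mathlib

open Matrix

/-- The coordinate change `Φ(x, y, z) = (C, χ, z)` with `C = (x² + y² + z²)/2`
and `χ = e^{−z²/2} arctan(y/x)`, on points `p = (p 0, p 1, p 2)` of `ℝ³`. -/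
noncomputable def Phi (p : Fin 3 → ℝ) : Fin 3 → ℝ :=
  ![(p 0 ^ 2 + p 1 ^ 2 + p 2 ^ 2) / 2,
    Real.exp (-(p 2) ^ 2 / 2) * Real.arctan (p 1 / p 0),
    p 2]

/-- On the open set `{x > 0}`, the map `Φ = (C, χ, z)` is differentiable and the
determinant of its Jacobian matrix equals `e^{−z²/2}`; hence
`dC ∧ dχ ∧ dz = e^{−z²/2} dx ∧ dy ∧ dz`. -/
theorem jacobian_det_of_casimir_coordinates
    (p : Fin 3 → ℝ) (hp : 0 < p 0) :
    DifferentiableAt ℝ Phi p ∧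
    (Matrix.of fun i j => fderiv ℝ (fun q => Phi q i) p (Pi.single j 1)).det
      = Real.exp (-(p 2) ^ 2 / 2) := by
  have hx : p 0 ≠ 0 := ne_of_gt hp
  have hproj : ∀ i : Fin 3, HasFDerivAt (fun q : Fin 3 → ℝ => q i)
      (ContinuousLinearMap.proj (R := ℝ) (φ := fun _ : Fin 3 => ℝ) i) p := fun i =>
    (ContinuousLinearMap.proj (R := ℝ) (φ := fun _ : Fin 3 => ℝ) i).hasFDerivAt
  have h0 := ((((hproj 0).mul (hproj 0)).add ((hproj 1).mul (hproj 1))).add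
      ((hproj 2).mul (hproj 2))).mul_const (2:ℝ)⁻¹
  have hexp := ((((hproj 2).mul (hproj 2)).mul_const (2:ℝ)⁻¹).neg).exp
  have hinv := (hasDerivAt_inv hx).comp_hasFDerivAt p (hproj 0)
  have hdiv := (hproj 1).mul hinv
  have harctan := (Real.hasDerivAt_arctan (p 1 * (p 0)⁻¹)).comp_hasFDerivAt p hdiv
  have h1 := hexp.mul harctan
  have h2 := hproj 2
  have hPhi0 : (fun q => Phi q 0) =
      fun q : Fin 3 → ℝ => (q 0 * q 0 + q 1 * q 1 + q 2 * q 2) * (2:ℝ)⁻¹ := by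
    funext q; show (q 0 ^ 2 + q 1 ^ 2 + q 2 ^ 2) / 2 = _; ring
  have hPhi1 : (fun q => Phi q 1) =
      fun q : Fin 3 → ℝ => Real.exp (-(q 2 * q 2 * (2:ℝ)⁻¹)) * Real.arctan (q 1 * (q 0)⁻¹) := by
    funext q
    show Real.exp (-(q 2) ^ 2 / 2) * Real.arctan (q 1 / q 0) = _
    rw [div_eq_mul_inv (q 1)]
    congr 1
    ring
  have hPhi2 : (fun q => Phi q 2) = fun q : Fin 3 → ℝ => q 2 := rfl
  have h0' : HasFDerivAt (fun q => Phi q 0) _ p := hPhi0 ▸ h0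
  have h1' : HasFDerivAt (fun q => Phi q 1) _ p :=
    h1.congr_of_eventuallyEq (Filter.Eventually.of_forall fun q => congrFun hPhi1 q)
  have h2' : HasFDerivAt (fun q => Phi q 2) _ p := hPhi2 ▸ h2
  constructor
  · rw [differentiableAt_pi]
    intro i
    fin_cases i
    · exact h0'.differentiableAt
    · exact h1'.differentiableAt
    · exact h2'.differentiableAt
  · rw [Matrix.det_fin_three]
    simp only [Matrix.of_apply, h0'.fderiv, h1'.fderiv, h2'.fderiv]
    have hne : p 0 * p 0 + p 1 * p 1 ≠ 0 :=
      ne_of_gt (by nlinarith [mul_pos hp hp, mul_self_nonneg (p 1)])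
    simp only [ContinuousLinearMap.add_apply, ContinuousLinearMap.smul_apply,
      ContinuousLinearMap.sub_apply, ContinuousLinearMap.neg_apply,
      ContinuousLinearMap.coe_smul', Pi.smul_apply, ContinuousLinearMap.proj_apply,
      Pi.single_apply, smul_eq_mul]
    norm_num [Fin.ext_iff]
    have harg : -(p 2 * p 2 * (1/2:ℝ)) = -(p 2)^2/2 := by ring
    rw [harg]
    have h1px : 1 + (p 1 * (p 0)⁻¹)^2 = (p 0 * p 0 + p 1 * p 1) / (p 0 * p 0) := by
      field_simp
    rw [h1px]
    field_simp
    ring
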